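/- Let p⁺ and p⁻ be probability densities on ℝ^d (with respect to Lebesgue measure), let k : ℝ^d × ℝ^d → ℝ be a measurable positive transition kernel with y ↦ k(y,x) differentiable, and define the noisy marginals q⁺(y) = ∫ p⁺(x) k(y, x) dx and q⁻(y) = ∫ p⁻(x) k(y, x) dx, assumed strictly positive. Let g(y, x) = ∇_y log k(y, x), and assume that for a.e. y the score identities ∇ log q⁺(y) = ∫ (p⁺(x)k(y,x)/q⁺(y)) g(y,x) dx and ∇ log q⁻(y) = ∫ (p⁻(x)k(y,x)/q⁻(y)) g(y,x) dx hold, with ∫∫ ‖g(y,x)‖² p⁺(x)k(y,x) dx dy < ∞ and ∫∫ (q⁺(y)/q⁻(y))‖g(y,x)‖² p⁻(x)k(y,x) dx dy < ∞. Let η ≥ 0 and define, for measurable s : ℝ^d → ℝ^d with ∫ q⁺(y)‖s(y)‖² dy < ∞, J(s) = (1+η)∫∫ ‖g(y,x) − s(y)‖² p⁺(x) k(y,x) dx dy − η ∫∫ (q⁺(y)/q⁻(y)) ‖g(y,x) − s(y)‖² p⁻(x) k(y,x) dx dy, and define s*(y) = (1+η)∇log q⁺(y) − η∇log q⁻(y).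 Then J(s) − J(s*) = ∫ q⁺(y)‖s(y) − s*(y)‖² dy ≥ 0; in particular the generalized CFG-style score s* is the unique (up to q⁺-null sets) minimizer of J. -/

import Mathlib

open MeasureTheory Real Filter Topology
open scoped RealInnerProductSpace

section Aux

variable {α : Type*} [MeasurableSpace α] {μ : Measure α}
variable {F : Type*} [NormedAddCommGroup F] [InnerProductSpace ℝ F] [CompleteSpace F]

lemma integrable_wsmul (w : α → ℝ) (G : α → F) (hw0 : ∀ x, 0 ≤ w x)
    (hwi : Integrable w μ) (hGm : AEStronglyMeasurable G μ)
    (hwG2 : Integrable (fun x => w x * ‖G x‖ ^ 2) μ) :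
    Integrable (fun x => w x • G x) μ := by
  refine Integrable.mono' (hwi.add hwG2) (hwi.aestronglyMeasurable.smul hGm) ?_
  refine Eventually.of_forall fun x => ?_
  simp only [Pi.add_apply]
  rw [norm_smul, Real.norm_eq_abs, abs_of_nonneg (hw0 x)]
  nlinarith [hw0 x, norm_nonneg (G x), mul_nonneg (hw0 x) (sq_nonneg (‖G x‖ - 1))]

lemma expand_sq (w : α → ℝ) (G : α → F) (hw0 : ∀ x, 0 ≤ w x)
    (hwi : Integrable w μ) (hGm : AEStronglyMeasurable G μ)
    (hwG2 : Integrable (fun x => w x * ‖G x‖ ^ 2) μ) (v : F) :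
    ∫ x, w x * ‖G x - v‖ ^ 2 ∂μ
      = (∫ x, w x * ‖G x‖ ^ 2 ∂μ) - 2 * ⟪v, ∫ x, w x • G x ∂μ⟫
        + (∫ x, w x ∂μ) * ‖v‖ ^ 2 := by
  have hsm : Integrable (fun x => w x • G x) μ := integrable_wsmul w G hw0 hwi hGm hwG2
  have hinner : Integrable (fun x => ⟪v, w x • G x⟫) μ := hsm.const_inner v
  have hpt : ∀ x, w x * ‖G x - v‖ ^ 2
      = w x * ‖G x‖ ^ 2 - 2 * ⟪v, w x • G x⟫ + w x * ‖v‖ ^ 2 := by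
    intro x
    rw [norm_sub_sq_real, real_inner_smul_right, real_inner_comm]
    ring
  calc ∫ x, w x * ‖G x - v‖ ^ 2 ∂μ
      = ∫ x, (w x * ‖G x‖ ^ 2 - 2 * ⟪v, w x • G x⟫ + w x * ‖v‖ ^ 2) ∂μ :=
        integral_congr_ae (Eventually.of_forall fun x => hpt x)
    _ = (∫ x, (w x * ‖G x‖ ^ 2 - 2 * ⟪v, w x • G x⟫) ∂μ) + ∫ x, w x * ‖v‖ ^ 2 ∂μ :=
        integral_add (hwG2.sub (hinner.const_mul 2)) (hwi.mul_const _)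
    _ = (∫ x, w x * ‖G x‖ ^ 2 ∂μ) - ∫ x, 2 * ⟪v, w x • G x⟫ ∂μ + ∫ x, w x * ‖v‖ ^ 2 ∂μ := by
        rw [integral_sub hwG2 (hinner.const_mul 2)]
    _ = (∫ x, w x * ‖G x‖ ^ 2 ∂μ) - 2 * ⟪v, ∫ x, w x • G x ∂μ⟫ + (∫ x, w x ∂μ) * ‖v‖ ^ 2 := by
        rw [integral_const_mul, integral_inner hsm, integral_mul_const]

lemma final_algebra (η q Ia Ib : ℝ) (u a b : F) :
    (1 + η) * ((Ia - 2 * (q * ⟪u, a⟫) + q * ‖u‖ ^ 2)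
        - (Ia - 2 * (q * ⟪(1 + η) • a - η • b, a⟫) + q * ‖(1 + η) • a - η • b‖ ^ 2))
      - η * ((Ib - 2 * (q * ⟪u, b⟫) + q * ‖u‖ ^ 2)
        - (Ib - 2 * (q * ⟪(1 + η) • a - η • b, b⟫) + q * ‖(1 + η) • a - η • b‖ ^ 2))
      = q * ‖u - ((1 + η) • a - η • b)‖ ^ 2 := by
  have key : ∀ x : F, ⟪x, (1 + η) • a - η • b⟫ = (1 + η) * ⟪x, a⟫ - η * ⟪x, b⟫ := fun x => by
    rw [inner_sub_right, real_inner_smul_right, real_inner_smul_right]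
  have h1 := key u
  have h2 := key ((1 + η) • a - η • b)
  have h2' : ⟪((1 + η) • a - η • b : F), a⟫ = ⟪a, (1 + η) • a - η • b⟫ := real_inner_comm _ _
  have h2'' : ⟪((1 + η) • a - η • b : F), b⟫ = ⟪b, (1 + η) • a - η • b⟫ := real_inner_comm _ _
  have h3 : ⟪((1 + η) • a - η • b : F), (1 + η) • a - η • b⟫ = ‖(1 + η) • a - η • b‖ ^ 2 :=
    real_inner_self_eq_norm_sq _
  have h4 := norm_sub_sq_real u ((1 + η) • a - η • b)
  linear_combination (-q) * h4 + (2 * q) * h1 + (-2 * q) * h2 + (2 * q) * h3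

end Aux

section Meas

variable {d : ℕ}

lemma measurable_gradient_aux (f : EuclideanSpace ℝ (Fin d) → ℝ) :
    Measurable (gradient f) := by
  have : gradient f = fun y => (InnerProductSpace.toDual ℝ _).symm (fderiv ℝ f y) := rfl
  rw [this]
  exact (LinearIsometryEquiv.continuous _).measurable.comp (measurable_fderiv ℝ f)

lemma measurable_g_aux (k : EuclideanSpace ℝ (Fin d) → EuclideanSpace ℝ (Fin d) → ℝ)
    (hkm : Measurable (fun z : EuclideanSpace ℝ (Fin d) × EuclideanSpace ℝ (Fin d) => k z.1 z.2))
    (hkpos : ∀ y x, 0 < k y x)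
    (hkdiff : ∀ x, Differentiable ℝ (fun y => k y x)) :
    Measurable (fun z : EuclideanSpace ℝ (Fin d) × EuclideanSpace ℝ (Fin d) =>
      gradient (fun y' => Real.log (k y' z.2)) z.1) := by
  have hdiff : ∀ x, Differentiable ℝ (fun y => Real.log (k y x)) :=
    fun x y => ((hkdiff x) y).log (hkpos y x).ne'
  suffices hsuff : Measurable (fun z : EuclideanSpace ℝ (Fin d) × EuclideanSpace ℝ (Fin d) =>
      WithLp.ofLp (gradient (fun y' => Real.log (k y' z.2)) z.1)) by
    exact (PiLp.continuous_toLp 2 _).measurable.comp hsuff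
  apply measurable_pi_iff.mpr
  intro i
  change Measurable (fun z : EuclideanSpace ℝ (Fin d) × EuclideanSpace ℝ (Fin d) =>
      (gradient (fun y' => Real.log (k y' z.2)) z.1) i)
  set v : EuclideanSpace ℝ (Fin d) := EuclideanSpace.single i (1:ℝ) with hv
  have heq : ∀ z : EuclideanSpace ℝ (Fin d) × EuclideanSpace ℝ (Fin d),
      (gradient (fun y' => Real.log (k y' z.2)) z.1) i
      = fderiv ℝ (fun y' => Real.log (k y' z.2)) z.1 v := by
    intro z
    have h1 : ⟪gradient (fun y' => Real.log (k y' z.2)) z.1, v⟫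
        = fderiv ℝ (fun y' => Real.log (k y' z.2)) z.1 v := by
      rw [show gradient (fun y' => Real.log (k y' z.2)) z.1
          = (InnerProductSpace.toDual ℝ (EuclideanSpace ℝ (Fin d))).symm
            (fderiv ℝ (fun y' => Real.log (k y' z.2)) z.1) from rfl,
        InnerProductSpace.toDual_symm_apply]
    rw [← h1, hv, EuclideanSpace.inner_single_right]
    simp
  simp_rw [heq]
  have hmeas : ∀ n : ℕ, Measurable (fun z : EuclideanSpace ℝ (Fin d) × EuclideanSpace ℝ (Fin d) =>
      (Real.log (k (z.1 + ((n : ℝ) + 1)⁻¹ • v) z.2) - Real.log (k z.1 z.2)) * ((n : ℝ) + 1)) := by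
    intro n
    have h1 : Measurable (fun z : EuclideanSpace ℝ (Fin d) × EuclideanSpace ℝ (Fin d) =>
        k (z.1 + ((n : ℝ) + 1)⁻¹ • v) z.2) :=
      hkm.comp ((measurable_fst.add_const _).prodMk measurable_snd)
    exact ((h1.log).sub (hkm.log)).mul_const _
  apply measurable_of_tendsto_metrizable hmeas
  rw [tendsto_pi_nhds]
  intro z
  set f : EuclideanSpace ℝ (Fin d) → ℝ := fun y' => Real.log (k y' z.2) with hf
  have hφ : HasDerivAt (fun t : ℝ => f (z.1 + t • v)) (fderiv ℝ f z.1 v) 0 := by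
    have h1 : HasFDerivAt f (fderiv ℝ f z.1) (z.1 + (0:ℝ) • v) := by
      simpa using ((hdiff z.2) z.1).hasFDerivAt
    have h2 : HasDerivAt (fun t : ℝ => z.1 + t • v) v 0 := by
      simpa using ((hasDerivAt_id (0:ℝ)).smul_const v).const_add z.1
    have h3 := h1.comp_hasDerivAt (x := (0:ℝ)) h2
    exact h3
  have hslope := hasDerivAt_iff_tendsto_slope.mp hφ
  have htend : Tendsto (fun n : ℕ => ((n : ℝ) + 1)⁻¹) atTop (𝓝[≠] (0:ℝ)) := by
    rw [tendsto_nhdsWithin_iff]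
    constructor
    · simpa only [one_div] using tendsto_one_div_add_atTop_nhds_zero_nat (𝕜 := ℝ)
    · exact Eventually.of_forall fun n => Set.mem_compl_singleton_iff.mpr (by positivity)
  have hcomp := hslope.comp htend
  convert hcomp using 2 with n
  simp only [Function.comp_apply, slope_def_field]
  rw [zero_smul, add_zero]
  field_simp
  simp [hf]

end Meas

set_option maxHeartbeats 1000000 in
/-- **Paper's Corollary 3 (CFG variants under the alignment framework), at a fixed
time.**  For any two data densities `p⁺` and `p⁻` (e.g. a strong and a weak model for
Autoguidance, or a reward-fine-tuned and a base model for inference-time alignment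
guidance), with positive transition kernel `k`, noisy marginals
`q⁺ y = ∫ p⁺ x · k y x dx` and `q⁻ y = ∫ p⁻ x · k y x dx` (strictly positive),
transition score `g y x = ∇_y log k y x`, the a.e. score identities and the stated
square-integrability conditions, the MCLR-style contrastive objective
`J s = (1+η) ∬ ‖g − s‖² p⁺ k − η ∬ (q⁺/q⁻) ‖g − s‖² p⁻ k`
satisfies `J s − J s* = ∫ q⁺ ‖s − s*‖² ≥ 0` for the generalized CFG-style score
`s* = (1+η) ∇log q⁺ − η ∇log q⁻`; in particular `s*` is the unique (up to `q⁺`-null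
sets) minimizer of `J`. -/
theorem cfg_variant_equals_weighted_mclr {d : ℕ}
    (pplus pminus : EuclideanSpace ℝ (Fin d) → ℝ)
    (hppm : Measurable pplus) (hpmm : Measurable pminus)
    (hpp0 : ∀ x, 0 ≤ pplus x) (hpm0 : ∀ x, 0 ≤ pminus x)
    (hppi : Integrable pplus) (hpmi : Integrable pminus)
    (hpp1 : ∫ x, pplus x = 1) (hpm1 : ∫ x, pminus x = 1)
    (k : EuclideanSpace ℝ (Fin d) → EuclideanSpace ℝ (Fin d) → ℝ)
    (hkm : Measurable (fun z : EuclideanSpace ℝ (Fin d) × EuclideanSpace ℝ (Fin d) => k z.1 z.2))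
    (hkpos : ∀ y x, 0 < k y x)
    (hkdiff : ∀ x, Differentiable ℝ (fun y => k y x))
    (qplus qminus : EuclideanSpace ℝ (Fin d) → ℝ)
    (hqplus : ∀ y, qplus y = ∫ x, pplus x * k y x) (hqminus : ∀ y, qminus y = ∫ x, pminus x * k y x)
    (hqppos : ∀ y, 0 < qplus y) (hqmpos : ∀ y, 0 < qminus y)
    (g : EuclideanSpace ℝ (Fin d) → EuclideanSpace ℝ (Fin d) → EuclideanSpace ℝ (Fin d))
    (hg : ∀ y x, g y x = gradient (fun y' => Real.log (k y' x)) y)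
    (hscore_p : ∀ᵐ y ∂volume, gradient (fun y' => Real.log (qplus y')) y
      = ∫ x, (pplus x * k y x / qplus y) • g y x)
    (hscore_m : ∀ᵐ y ∂volume, gradient (fun y' => Real.log (qminus y')) y
      = ∫ x, (pminus x * k y x / qminus y) • g y x)
    (hg_sq_p : Integrable
      (fun z : EuclideanSpace ℝ (Fin d) × EuclideanSpace ℝ (Fin d) =>
        pplus z.2 * k z.1 z.2 * ‖g z.1 z.2‖ ^ 2) (volume.prod volume))
    (hg_sq_m : Integrable
      (fun z : EuclideanSpace ℝ (Fin d) × EuclideanSpace ℝ (Fin d) =>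
        (qplus z.1 / qminus z.1) * (pminus z.2 * k z.1 z.2) * ‖g z.1 z.2‖ ^ 2) (volume.prod volume))
    (η : ℝ) (hη : 0 ≤ η)
    (J : (EuclideanSpace ℝ (Fin d) → EuclideanSpace ℝ (Fin d)) → ℝ)
    (hJ : ∀ t, J t
      = (1 + η) * (∫ y, ∫ x, pplus x * k y x * ‖g y x - t y‖ ^ 2)
        - η * ∫ y, ∫ x, (qplus y / qminus y) * (pminus x * k y x) * ‖g y x - t y‖ ^ 2)
    (sstar : EuclideanSpace ℝ (Fin d) → EuclideanSpace ℝ (Fin d))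
    (hsstar : ∀ y, sstar y
      = (1 + η) • gradient (fun y' => Real.log (qplus y')) y
        - η • gradient (fun y' => Real.log (qminus y')) y)
    (s : EuclideanSpace ℝ (Fin d) → EuclideanSpace ℝ (Fin d))
    (hsm : Measurable s)
    (hs_sq : Integrable (fun y => qplus y * ‖s y‖ ^ 2)) :
    (J s - J sstar = ∫ y, qplus y * ‖s y - sstar y‖ ^ 2) ∧
      (0 ≤ ∫ y, qplus y * ‖s y - sstar y‖ ^ 2) ∧
      (J s = J sstar → s =ᵐ[volume.withDensity fun y => ENNReal.ofReal (qplus y)] sstar) := by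
  set Gp := gradient (fun y' => Real.log (qplus y')) with hGpdef
  set Gm := gradient (fun y' => Real.log (qminus y')) with hGmdef
  -- joint measurability of g
  have hgmJ : Measurable (fun z : EuclideanSpace ℝ (Fin d) × EuclideanSpace ℝ (Fin d) =>
      g z.1 z.2) := by
    have h1 : (fun z : EuclideanSpace ℝ (Fin d) × EuclideanSpace ℝ (Fin d) => g z.1 z.2)
        = fun z => gradient (fun y' => Real.log (k y' z.2)) z.1 := funext fun z => hg z.1 z.2
    rw [h1]
    exact measurable_g_aux k hkm hkpos hkdiff
  have hgy : ∀ y, Measurable (g y) := fun y => hgmJ.comp measurable_prodMk_left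
  have hGpm : Measurable Gp := measurable_gradient_aux _
  have hGmm : Measurable Gm := measurable_gradient_aux _
  have hsstarm : Measurable sstar := by
    have h1 : sstar = fun y => (1 + η) • Gp y - η • Gm y := funext fun y => hsstar y
    rw [h1]
    fun_prop
  -- integrability of sections of the weights
  have hwpi : ∀ y, Integrable (fun x => pplus x * k y x) := by
    intro y
    by_contra h
    exact (hqppos y).ne' ((hqplus y).trans (integral_undef h))
  have hwmi : ∀ y, Integrable (fun x => pminus x * k y x) := by
    intro y
    by_contra h
    exact (hqmpos y).ne' ((hqminus y).trans (integral_undef h))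
  -- measurability of various y-functions
  have hqpm : Measurable qplus := by
    have h1 : qplus = fun y => ∫ x, pplus x * k y x := funext hqplus
    rw [h1]
    exact (((hppm.comp measurable_snd).mul hkm).stronglyMeasurable.integral_prod_right').measurable
  have hqmm : Measurable qminus := by
    have h1 : qminus = fun y => ∫ x, pminus x * k y x := funext hqminus
    rw [h1]
    exact (((hpmm.comp measurable_snd).mul hkm).stronglyMeasurable.integral_prod_right').measurable
  -- the two marginal "energy" functions
  have hIpint : Integrable (fun y => ∫ x, pplus x * k y x * ‖g y x‖ ^ 2) :=
    hg_sq_p.integral_prod_left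
  have hImint : Integrable (fun y => ∫ x, (qplus y / qminus y) * (pminus x * k y x) * ‖g y x‖ ^ 2) :=
    hg_sq_m.integral_prod_left
  -- main pointwise expansion, a.e. in y
  have main : ∀ᵐ y ∂volume, ∀ v : EuclideanSpace ℝ (Fin d),
      (∫ x, pplus x * k y x * ‖g y x - v‖ ^ 2
        = (∫ x, pplus x * k y x * ‖g y x‖ ^ 2) - 2 * (qplus y * ⟪v, Gp y⟫) + qplus y * ‖v‖ ^ 2)
      ∧ (∫ x, (qplus y / qminus y) * (pminus x * k y x) * ‖g y x - v‖ ^ 2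
        = (∫ x, (qplus y / qminus y) * (pminus x * k y x) * ‖g y x‖ ^ 2)
            - 2 * (qplus y * ⟪v, Gm y⟫) + qplus y * ‖v‖ ^ 2) := by
    filter_upwards [hg_sq_p.prod_right_ae, hg_sq_m.prod_right_ae, hscore_p, hscore_m]
      with y h1 h2 h3 h4
    intro v
    have hgradp : (∫ x, (pplus x * k y x) • g y x) = qplus y • Gp y := by
      rw [h3, ← integral_smul]
      refine integral_congr_ae (Eventually.of_forall fun x => ?_)
      beta_reduce
      rw [smul_smul]
      congr 1
      field_simp [(hqppos y).ne']
    have hgradm : (∫ x, (pminus x * k y x) • g y x) = qminus y • Gm y := by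
      rw [h4, ← integral_smul]
      refine integral_congr_ae (Eventually.of_forall fun x => ?_)
      beta_reduce
      rw [smul_smul]
      congr 1
      field_simp [(hqmpos y).ne']
    constructor
    · have hE := expand_sq (fun x => pplus x * k y x) (g y)
        (fun x => mul_nonneg (hpp0 x) (hkpos y x).le) (hwpi y)
        (hgy y).aestronglyMeasurable h1 v
      calc ∫ x, pplus x * k y x * ‖g y x - v‖ ^ 2
          = (∫ x, pplus x * k y x * ‖g y x‖ ^ 2)
              - 2 * ⟪v, ∫ x, (pplus x * k y x) • g y x⟫
              + (∫ x, pplus x * k y x) * ‖v‖ ^ 2 := hE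
        _ = (∫ x, pplus x * k y x * ‖g y x‖ ^ 2) - 2 * (qplus y * ⟪v, Gp y⟫)
              + qplus y * ‖v‖ ^ 2 := by
            rw [hgradp, real_inner_smul_right, ← hqplus y]
    · have hwm : Integrable (fun x => qplus y / qminus y * (pminus x * k y x)) :=
        (hwmi y).const_mul _
      have hE := expand_sq (fun x => qplus y / qminus y * (pminus x * k y x)) (g y)
        (fun x => mul_nonneg (div_nonneg (hqppos y).le (hqmpos y).le)
          (mul_nonneg (hpm0 x) (hkpos y x).le)) hwm
        (hgy y).aestronglyMeasurable h2 v
      have hgradm2 : (∫ x, (qplus y / qminus y * (pminus x * k y x)) • g y x)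
          = qplus y • Gm y := by
        calc (∫ x, (qplus y / qminus y * (pminus x * k y x)) • g y x)
            = ∫ x, (qplus y / qminus y) • ((pminus x * k y x) • g y x) := by
              refine integral_congr_ae (Eventually.of_forall fun x => ?_)
              beta_reduce
              rw [smul_smul]
          _ = (qplus y / qminus y) • ∫ x, (pminus x * k y x) • g y x := integral_smul _ _
          _ = (qplus y / qminus y) • (qminus y • Gm y) := by rw [hgradm]
          _ = qplus y • Gm y := by rw [smul_smul, div_mul_cancel₀ _ (hqmpos y).ne']
      have hsum : (∫ x, qplus y / qminus y * (pminus x * k y x)) = qplus y := by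
        rw [integral_const_mul, ← hqminus y, div_mul_cancel₀ _ (hqmpos y).ne']
      calc ∫ x, qplus y / qminus y * (pminus x * k y x) * ‖g y x - v‖ ^ 2
          = (∫ x, qplus y / qminus y * (pminus x * k y x) * ‖g y x‖ ^ 2)
              - 2 * ⟪v, ∫ x, (qplus y / qminus y * (pminus x * k y x)) • g y x⟫
              + (∫ x, qplus y / qminus y * (pminus x * k y x)) * ‖v‖ ^ 2 := hE
        _ = (∫ x, qplus y / qminus y * (pminus x * k y x) * ‖g y x‖ ^ 2)
              - 2 * (qplus y * ⟪v, Gm y⟫) + qplus y * ‖v‖ ^ 2 := by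
            rw [hgradm2, real_inner_smul_right, hsum]
  -- Jensen-type bounds
  have hJenp : ∀ᵐ y ∂volume, qplus y * ‖Gp y‖ ^ 2 ≤ ∫ x, pplus x * k y x * ‖g y x‖ ^ 2 := by
    filter_upwards [main] with y hy
    have h := (hy (Gp y)).1
    have hnn : (0:ℝ) ≤ ∫ x, pplus x * k y x * ‖g y x - Gp y‖ ^ 2 :=
      integral_nonneg fun x => mul_nonneg (mul_nonneg (hpp0 x) (hkpos y x).le) (by positivity)
    rw [h] at hnn
    rw [real_inner_self_eq_norm_sq] at hnn
    linarith
  have hJenm : ∀ᵐ y ∂volume, qplus y * ‖Gm y‖ ^ 2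
      ≤ ∫ x, (qplus y / qminus y) * (pminus x * k y x) * ‖g y x‖ ^ 2 := by
    filter_upwards [main] with y hy
    have h := (hy (Gm y)).2
    have hnn : (0:ℝ) ≤ ∫ x, (qplus y / qminus y) * (pminus x * k y x) * ‖g y x - Gm y‖ ^ 2 :=
      integral_nonneg fun x => mul_nonneg
        (mul_nonneg (div_nonneg (hqppos y).le (hqmpos y).le)
          (mul_nonneg (hpm0 x) (hkpos y x).le)) (by positivity)
    rw [h] at hnn
    rw [real_inner_self_eq_norm_sq] at hnn
    linarith
  -- sstar is square integrable against qplus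
  have hsstar_sq : Integrable (fun y => qplus y * ‖sstar y‖ ^ 2) := by
    refine Integrable.mono'
      ((hIpint.const_mul (2 * (1 + η) ^ 2)).add (hImint.const_mul (2 * η ^ 2)))
      ((hqpm.mul ((hsstarm.norm).pow_const 2)).aestronglyMeasurable) ?_
    filter_upwards [hJenp, hJenm] with y h1 h2
    simp only [Pi.add_apply]
    rw [Real.norm_eq_abs, abs_of_nonneg (mul_nonneg (hqppos y).le (by positivity))]
    have hb : ‖sstar y‖ ^ 2 ≤ 2 * (1 + η) ^ 2 * ‖Gp y‖ ^ 2 + 2 * η ^ 2 * ‖Gm y‖ ^ 2 := by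
      rw [hsstar y]
      have ht := norm_sub_le ((1 + η) • Gp y) (η • Gm y)
      have h3 : ‖(1 + η) • Gp y‖ = (1 + η) * ‖Gp y‖ := by
        rw [norm_smul, Real.norm_eq_abs, abs_of_nonneg (by linarith)]
      have h4 : ‖η • Gm y‖ = η * ‖Gm y‖ := by
        rw [norm_smul, Real.norm_eq_abs, abs_of_nonneg hη]
      rw [h3, h4] at ht
      have h5 : (0:ℝ) ≤ ‖(1 + η) • Gp y - η • Gm y‖ := norm_nonneg _
      have h6 : (0:ℝ) ≤ (1 + η) * ‖Gp y‖ := by positivity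
      have h7 : (0:ℝ) ≤ η * ‖Gm y‖ := by positivity
      calc ‖(1 + η) • Gp y - η • Gm y‖ ^ 2 ≤ ((1 + η) * ‖Gp y‖ + η * ‖Gm y‖) ^ 2 := by
            exact pow_le_pow_left₀ h5 ht 2
        _ ≤ 2 * (1 + η) ^ 2 * ‖Gp y‖ ^ 2 + 2 * η ^ 2 * ‖Gm y‖ ^ 2 := by
            nlinarith [sq_nonneg ((1 + η) * ‖Gp y‖ - η * ‖Gm y‖)]
    nlinarith [mul_le_mul_of_nonneg_left hb (hqppos y).le,
      mul_le_mul_of_nonneg_left h1 (by positivity : (0:ℝ) ≤ 2 * (1 + η) ^ 2),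
      mul_le_mul_of_nonneg_left h2 (by positivity : (0:ℝ) ≤ 2 * η ^ 2)]
  -- integrability of the inner-product cross terms
  have hmid : ∀ (t : EuclideanSpace ℝ (Fin d) → EuclideanSpace ℝ (Fin d)) (G : EuclideanSpace ℝ (Fin d) → EuclideanSpace ℝ (Fin d))
      (I : EuclideanSpace ℝ (Fin d) → ℝ), Measurable t → Measurable G → Integrable I →
      Integrable (fun y => qplus y * ‖t y‖ ^ 2) →
      (∀ᵐ y ∂volume, qplus y * ‖G y‖ ^ 2 ≤ I y) →
      Integrable (fun y => qplus y * ⟪t y, G y⟫) := by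
    intro t G I ht hG hI ht2 hJen
    refine Integrable.mono' ((ht2.add hI).const_mul 2⁻¹)
      ((hqpm.mul (ht.inner hG)).aestronglyMeasurable) ?_
    filter_upwards [hJen] with y h1
    beta_reduce
    simp only [Pi.add_apply]
    rw [Real.norm_eq_abs, abs_mul, abs_of_nonneg (hqppos y).le]
    have h2 : |⟪t y, G y⟫| ≤ ‖t y‖ * ‖G y‖ := abs_real_inner_le_norm _ _
    have h3 := mul_le_mul_of_nonneg_left h2 (hqppos y).le
    nlinarith [mul_nonneg (hqppos y).le (sq_nonneg (‖t y‖ - ‖G y‖))]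
  -- integrability of the four expanded integrands
  have hRint : ∀ (t : EuclideanSpace ℝ (Fin d) → EuclideanSpace ℝ (Fin d)), Measurable t →
      Integrable (fun y => qplus y * ‖t y‖ ^ 2) →
      Integrable (fun y => (∫ x, pplus x * k y x * ‖g y x‖ ^ 2)
          - 2 * (qplus y * ⟪t y, Gp y⟫) + qplus y * ‖t y‖ ^ 2)
      ∧ Integrable (fun y => (∫ x, (qplus y / qminus y) * (pminus x * k y x) * ‖g y x‖ ^ 2)
          - 2 * (qplus y * ⟪t y, Gm y⟫) + qplus y * ‖t y‖ ^ 2) := by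
    intro t ht ht2
    constructor
    · exact (hIpint.sub ((hmid t Gp _ ht hGpm hIpint ht2 hJenp).const_mul 2)).add ht2
    · exact (hImint.sub ((hmid t Gm _ ht hGmm hImint ht2 hJenm).const_mul 2)).add ht2
  obtain ⟨hRpS, hRmS⟩ := hRint s hsm hs_sq
  obtain ⟨hRpT, hRmT⟩ := hRint sstar hsstarm hsstar_sq
  -- rewrite J in expanded form
  have hJ_eq : ∀ (t : EuclideanSpace ℝ (Fin d) → EuclideanSpace ℝ (Fin d)),
      J t = (1 + η) * (∫ y, ((∫ x, pplus x * k y x * ‖g y x‖ ^ 2)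
          - 2 * (qplus y * ⟪t y, Gp y⟫) + qplus y * ‖t y‖ ^ 2))
        - η * ∫ y, ((∫ x, (qplus y / qminus y) * (pminus x * k y x) * ‖g y x‖ ^ 2)
          - 2 * (qplus y * ⟪t y, Gm y⟫) + qplus y * ‖t y‖ ^ 2) := by
    intro t
    rw [hJ t]
    congr 1
    · congr 1
      refine integral_congr_ae ?_
      filter_upwards [main] with y hy
      exact (hy (t y)).1
    · congr 1
      refine integral_congr_ae ?_
      filter_upwards [main] with y hy
      exact (hy (t y)).2
  -- the central identity
  have e2 : ∫ y, qplus y * ‖s y - sstar y‖ ^ 2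
      = ∫ y, ((1 + η) * (((∫ x, pplus x * k y x * ‖g y x‖ ^ 2) - 2 * (qplus y * ⟪s y, Gp y⟫) + qplus y * ‖s y‖ ^ 2) - ((∫ x, pplus x * k y x * ‖g y x‖ ^ 2) - 2 * (qplus y * ⟪sstar y, Gp y⟫) + qplus y * ‖sstar y‖ ^ 2)) - η * (((∫ x, (qplus y / qminus y) * (pminus x * k y x) * ‖g y x‖ ^ 2) - 2 * (qplus y * ⟪s y, Gm y⟫) + qplus y * ‖s y‖ ^ 2) - ((∫ x, (qplus y / qminus y) * (pminus x * k y x) * ‖g y x‖ ^ 2) - 2 * (qplus y * ⟪sstar y, Gm y⟫) + qplus y * ‖sstar y‖ ^ 2))) := by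
    refine integral_congr_ae (Eventually.of_forall fun y => ?_)
    beta_reduce
    rw [hsstar y]
    exact (final_algebra η (qplus y) _ _ (s y) (Gp y) (Gm y)).symm
  have e3 : ∫ y, ((1 + η) * (((∫ x, pplus x * k y x * ‖g y x‖ ^ 2) - 2 * (qplus y * ⟪s y, Gp y⟫) + qplus y * ‖s y‖ ^ 2) - ((∫ x, pplus x * k y x * ‖g y x‖ ^ 2) - 2 * (qplus y * ⟪sstar y, Gp y⟫) + qplus y * ‖sstar y‖ ^ 2)) - η * (((∫ x, (qplus y / qminus y) * (pminus x * k y x) * ‖g y x‖ ^ 2) - 2 * (qplus y * ⟪s y, Gm y⟫) + qplus y * ‖s y‖ ^ 2) - ((∫ x, (qplus y / qminus y) * (pminus x * k y x) * ‖g y x‖ ^ 2) - 2 * (qplus y * ⟪sstar y, Gm y⟫) + qplus y * ‖sstar y‖ ^ 2)))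
      = (1 + η) * ((∫ y, (∫ x, pplus x * k y x * ‖g y x‖ ^ 2) - 2 * (qplus y * ⟪s y, Gp y⟫) + qplus y * ‖s y‖ ^ 2) - (∫ y, (∫ x, pplus x * k y x * ‖g y x‖ ^ 2) - 2 * (qplus y * ⟪sstar y, Gp y⟫) + qplus y * ‖sstar y‖ ^ 2))
        - η * ((∫ y, (∫ x, (qplus y / qminus y) * (pminus x * k y x) * ‖g y x‖ ^ 2) - 2 * (qplus y * ⟪s y, Gm y⟫) + qplus y * ‖s y‖ ^ 2) - (∫ y, (∫ x, (qplus y / qminus y) * (pminus x * k y x) * ‖g y x‖ ^ 2) - 2 * (qplus y * ⟪sstar y, Gm y⟫) + qplus y * ‖sstar y‖ ^ 2)) := by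
    have I1 : Integrable (fun y => (1 + η) * (((∫ x, pplus x * k y x * ‖g y x‖ ^ 2) - 2 * (qplus y * ⟪s y, Gp y⟫) + qplus y * ‖s y‖ ^ 2) - ((∫ x, pplus x * k y x * ‖g y x‖ ^ 2) - 2 * (qplus y * ⟪sstar y, Gp y⟫) + qplus y * ‖sstar y‖ ^ 2))) volume :=
      (hRpS.sub hRpT).const_mul (1 + η)
    have I2 : Integrable (fun y => η * (((∫ x, (qplus y / qminus y) * (pminus x * k y x) * ‖g y x‖ ^ 2) - 2 * (qplus y * ⟪s y, Gm y⟫) + qplus y * ‖s y‖ ^ 2) - ((∫ x, (qplus y / qminus y) * (pminus x * k y x) * ‖g y x‖ ^ 2) - 2 * (qplus y * ⟪sstar y, Gm y⟫) + qplus y * ‖sstar y‖ ^ 2))) volume :=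
      (hRmS.sub hRmT).const_mul η
    rw [integral_sub I1 I2,
      integral_const_mul, integral_const_mul, integral_sub hRpS hRpT, integral_sub hRmS hRmT]
  have hmain_eq : J s - J sstar = ∫ y, qplus y * ‖s y - sstar y‖ ^ 2 := by
    rw [hJ_eq s, hJ_eq sstar, e2, e3]
    ring
  refine ⟨hmain_eq, integral_nonneg fun y => mul_nonneg (hqppos y).le (by positivity), ?_⟩
  intro hJs
  have hz : ∫ y, qplus y * ‖s y - sstar y‖ ^ 2 = 0 := by
    rw [← hmain_eq, hJs, sub_self]
  have hint : Integrable (fun y => qplus y * ‖s y - sstar y‖ ^ 2) := by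
    refine Integrable.mono' ((hs_sq.const_mul 2).add (hsstar_sq.const_mul 2))
      ((hqpm.mul (((hsm.sub hsstarm).norm).pow_const 2)).aestronglyMeasurable) ?_
    refine Eventually.of_forall fun y => ?_
    simp only [Pi.add_apply]
    rw [Real.norm_eq_abs, abs_of_nonneg (mul_nonneg (hqppos y).le (by positivity))]
    have h2 : ‖s y - sstar y‖ ≤ ‖s y‖ + ‖sstar y‖ := norm_sub_le _ _
    nlinarith [norm_nonneg (s y - sstar y), norm_nonneg (s y), norm_nonneg (sstar y),
      mul_le_mul_of_nonneg_left (mul_self_le_mul_self (norm_nonneg _) h2) (hqppos y).le,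
      mul_nonneg (hqppos y).le (sq_nonneg (‖s y‖ - ‖sstar y‖))]
  have hae0 := (integral_eq_zero_iff_of_nonneg
    (fun y => mul_nonneg (hqppos y).le (by positivity)) hint).mp hz
  have hae : s =ᵐ[volume] sstar := by
    filter_upwards [hae0] with y hy
    have hy' : qplus y * ‖s y - sstar y‖ ^ 2 = 0 := hy
    have h1 : ‖s y - sstar y‖ ^ 2 = 0 := by
      rcases mul_eq_zero.mp hy' with h' | h'
      · exact absurd h' (hqppos y).ne'
      · exact h'
    have h2 : s y - sstar y = 0 := by
      have := pow_eq_zero_iff (n := 2) (by norm_num) |>.mp h1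
      simpa using this
    exact sub_eq_zero.mp h2
  exact hae.filter_mono ((withDensity_absolutelyContinuous volume _).ae_le)
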